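/- (Nonzero left–right overlap for a simple eigenvalue.) Let H be an n×n complex matrix and let E ∈ ℂ be a root of the characteristic polynomial of H of multiplicity exactly 1. Let v, w ∈ ℂⁿ be nonzero vectors with H·v = E·v and H†·w = conj(E)·w. Then ⟪w, v⟫ ≠ 0. (Hence the M-†-parity of a non-degenerate state in the exact phase on a mirror plane, defined through the mirror expectation value, is well defined and nonzero.) -/

import Mathlib

open Matrix

/-- The standard Hermitian inner product `⟪x, y⟫ = Σᵢ conj (x i) * y i` on `ℂⁿ`,
conjugate-linear in the first argument. -/
noncomputable def herm {n : ℕ} (x y : Fin n → ℂ) : ℂ :=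
  ∑ i, starRingEnd ℂ (x i) * y i

open Polynomial Module

lemma herm_eq_dot {n : ℕ} (x y : Fin n → ℂ) : herm x y = star x ⬝ᵥ y := by
  simp [herm, dotProduct, Pi.star_apply, RCLike.star_def]

lemma herm_adjoint {n : ℕ} (A : Matrix (Fin n) (Fin n) ℂ) (x y : Fin n → ℂ) :
    herm x (A *ᵥ y) = herm (Aᴴ *ᵥ x) y := by
  rw [herm_eq_dot, herm_eq_dot, dotProduct_mulVec, star_mulVec, conjTranspose_conjTranspose]

lemma herm_self_ne_zero {n : ℕ} {x : Fin n → ℂ} (hx : x ≠ 0) : herm x x ≠ 0 := by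
  intro h
  apply hx
  have h2 : ∑ i, (Complex.normSq (x i) : ℂ) = 0 := by
    rw [← h]; exact Finset.sum_congr rfl fun i _ => by
      rw [Complex.normSq_eq_conj_mul_self]
  have h3 : ∑ i, Complex.normSq (x i) = 0 := by exact_mod_cast h2
  funext i
  have := (Finset.sum_eq_zero_iff_of_nonneg (fun i _ => Complex.normSq_nonneg (x i))).mp h3 i
    (Finset.mem_univ i)
  simpa using Complex.normSq_eq_zero.mp this

lemma charpoly_sub_smul_one {n : ℕ} (H : Matrix (Fin n) (Fin n) ℂ) (E : ℂ) :
    (H - E • 1).charpoly = H.charpoly.comp (X + C E) := by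
  let f : ℂ[X] →+* ℂ[X] := eval₂RingHom Polynomial.C (X + C E)
  have hf : ∀ p : ℂ[X], f p = p.comp (X + C E) := fun p => rfl
  have key : (RingHom.mapMatrix f) (charmatrix H) = charmatrix (H - E • 1) := by
    ext i j
    by_cases hij : i = j
    · subst hij
      simp [f, charmatrix_apply_eq, Matrix.sub_apply, Matrix.smul_apply, Matrix.one_apply,
        map_sub, C_sub]
      ring
    · simp [f, charmatrix_apply_ne _ _ _ hij, Matrix.sub_apply, Matrix.smul_apply,
        Matrix.one_apply, hij]
  rw [Matrix.charpoly, Matrix.charpoly, ← key, ← RingHom.map_det, hf]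

/-- The linear functional `x ↦ herm w x`. -/
noncomputable def hermL {n : ℕ} (w : Fin n → ℂ) : (Fin n → ℂ) →ₗ[ℂ] ℂ where
  toFun x := herm w x
  map_add' x y := by simp [herm, mul_add, Finset.sum_add_distrib]
  map_smul' c x := by simp [herm, Finset.mul_sum]; ring_nf; simp [mul_comm, mul_left_comm]

/-- **Nonzero left–right overlap for a simple eigenvalue.**
If `E` is a root of the characteristic polynomial of `H` of multiplicity exactly `1`,
and `v, w` are nonzero right and left eigenvectors for `E` (`H v = E v`,
`H† w = conj(E) w`), then `⟪w, v⟫ ≠ 0`. Hence the M-†-parity of a non-degenerate state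
in the exact phase on a mirror plane, defined through the mirror expectation value, is
well defined and nonzero. -/
theorem simple_eigenvalue_left_right_overlap_ne_zero (n : ℕ)
    (H : Matrix (Fin n) (Fin n) ℂ) (E : ℂ)
    (hmult : H.charpoly.rootMultiplicity E = 1)
    (v w : Fin n → ℂ) (hv : v ≠ 0) (hw : w ≠ 0)
    (hHv : H.mulVec v = E • v)
    (hHw : Hᴴ.mulVec w = starRingEnd ℂ E • w) :
    herm w v ≠ 0 := by
  intro hcontra
  set A : Matrix (Fin n) (Fin n) ℂ := H - E • 1 with hA
  set ψ : Module.End ℂ (Fin n → ℂ) := Matrix.toLin' A with hψdef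
  have hψ_apply : ∀ x, ψ x = A *ᵥ x := fun x => Matrix.toLin'_apply A x
  have hAv : A *ᵥ v = 0 := by
    rw [hA, sub_mulVec, hHv, smul_mulVec, one_mulVec, sub_self]
  have hAH : Aᴴ *ᵥ w = 0 := by
    rw [hA, conjTranspose_sub, conjTranspose_smul, conjTranspose_one, sub_mulVec, hHw,
      smul_mulVec, one_mulVec, ← starRingEnd_apply, sub_self]
  -- characteristic polynomial of ψ
  have hcp : ψ.charpoly = A.charpoly := by
    rw [hψdef, ← LinearMap.charpoly_toMatrix (Matrix.toLin' A) (Pi.basisFun ℂ (Fin n)),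
      LinearMap.toMatrix_eq_toMatrix', LinearMap.toMatrix'_toLin']
  -- dimension of generalized eigenspace is 1
  have hG : finrank ℂ (ψ.maxGenEigenspace 0) = 1 := by
    rw [LinearMap.finrank_maxGenEigenspace_zero_eq, hcp, charpoly_sub_smul_one,
      ← rootMultiplicity_eq_natTrailingDegree, hmult]
  have hker_le_G : LinearMap.ker ψ ≤ ψ.maxGenEigenspace 0 := fun x hx => by
    rw [Module.End.mem_maxGenEigenspace]
    exact ⟨1, by simpa using hx⟩
  have hker2_le_G : LinearMap.ker (ψ ^ 2) ≤ ψ.maxGenEigenspace 0 := fun x hx => by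
    rw [Module.End.mem_maxGenEigenspace]
    exact ⟨2, by simpa using hx⟩
  have hv_ker : v ∈ LinearMap.ker ψ := by rw [LinearMap.mem_ker, hψ_apply, hAv]
  have hker_ne : finrank ℂ (LinearMap.ker ψ) ≠ 0 := fun h0 => by
    have hb : LinearMap.ker ψ = ⊥ := Submodule.finrank_eq_zero.mp h0
    exact hv (by simpa [hb] using hv_ker)
  have hker1 : finrank ℂ (LinearMap.ker ψ) = 1 :=
    le_antisymm (hG ▸ Submodule.finrank_mono hker_le_G) (Nat.one_le_iff_ne_zero.mpr hker_ne)
  have hker2 : LinearMap.ker ψ = LinearMap.ker (ψ ^ 2) := by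
    apply Submodule.eq_of_le_of_finrank_le
    · intro x hx
      rw [LinearMap.mem_ker] at hx ⊢
      rw [pow_two, Module.End.mul_apply, hx, map_zero]
    · rw [hker1]
      exact hG ▸ Submodule.finrank_mono hker2_le_G
  -- the linear functional
  set f := hermL w with hf
  have hf_ne : f ≠ 0 := by
    intro h
    exact herm_self_ne_zero hw (by rw [show herm w w = f w from rfl, h]; rfl)
  have hrange_f : finrank ℂ (LinearMap.range f) = 1 := by
    have h1 : finrank ℂ (LinearMap.range f) ≤ 1 := by
      simpa using Submodule.finrank_le (LinearMap.range f)
    have h2 : finrank ℂ (LinearMap.range f) ≠ 0 := fun h0 => by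
      have hb : LinearMap.range f = ⊥ := Submodule.finrank_eq_zero.mp h0
      exact hf_ne (LinearMap.range_eq_bot.mp hb)
    omega
  have hkerf : finrank ℂ (LinearMap.ker f) = n - 1 := by
    have := LinearMap.finrank_range_add_finrank_ker f
    simp only [hrange_f, Module.finrank_pi, Fintype.card_fin] at this
    omega
  have hrangeψ : finrank ℂ (LinearMap.range ψ) = n - 1 := by
    have := LinearMap.finrank_range_add_finrank_ker ψ
    simp only [hker1, Module.finrank_pi, Fintype.card_fin] at this
    omega
  have hle : LinearMap.range ψ ≤ LinearMap.ker f := by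
    rintro _ ⟨x, rfl⟩
    rw [LinearMap.mem_ker]
    show herm w (ψ x) = 0
    rw [hψ_apply, herm_adjoint, hAH]
    simp [herm]
  have heq : LinearMap.range ψ = LinearMap.ker f :=
    Submodule.eq_of_le_of_finrank_le hle (by rw [hkerf, hrangeψ])
  have hv_range : v ∈ LinearMap.range ψ := by
    rw [heq, LinearMap.mem_ker]
    exact hcontra
  obtain ⟨u, hu⟩ := hv_range
  have hu2 : u ∈ LinearMap.ker (ψ ^ 2) := by
    rw [LinearMap.mem_ker, pow_two, Module.End.mul_apply, hu]
    exact hv_ker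
  rw [← hker2, LinearMap.mem_ker] at hu2
  exact hv (by rw [← hu, hu2])
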